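/- There exists a constant C_β > 0, depending only on β, such that for every t > 0, y₀ > 0 and y > 0: p_t(y₀,y) ≤ (C_β / L_t^{β+1/2}) e^{−(√y − √{y_t})²/(2L_t)} y^{β−1} ( L_t^{1/2} + (y·y_t)^{1/4} ). -/

import Mathlib

noncomputable section

/-- The modified Bessel function of the first kind,
`I_ν(x) = (x/2)^ν ∑_{n≥0} (x/2)^{2n} / (n! Γ(n+ν+1))`. -/
def besselI (ν x : ℝ) : ℝ :=
  (x / 2) ^ ν *
    ∑' n : ℕ, (x / 2) ^ (2 * n) / ((n.factorial : ℝ) * Real.Gamma ((n : ℝ) + ν + 1))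

/-- `y_t = y₀ e^{-κ t}`. -/
def cirYt (κ t y₀ : ℝ) : ℝ := y₀ * Real.exp (-(κ * t))

/-- `L_t = (σ²/(4κ)) (1 - e^{-κ t})`. -/
def cirLt (κ σ t : ℝ) : ℝ := σ ^ 2 / (4 * κ) * (1 - Real.exp (-(κ * t)))

/-- The transition density of the CIR process with parameters `κ, θ, σ`:
`p_t(y₀,y) = (e^{-y_t/(2L_t)}/(2 y_t^{ν/2} L_t)) e^{-y/(2L_t)} y^{ν/2} I_ν(√(y y_t)/L_t)`,
where `ν = 2κθ/σ² - 1`. -/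
def cirDensity (κ θ σ t y₀ y : ℝ) : ℝ :=
  Real.exp (-cirYt κ t y₀ / (2 * cirLt κ σ t)) /
      (2 * cirYt κ t y₀ ^ ((2 * κ * θ / σ ^ 2 - 1) / 2) * cirLt κ σ t) *
    Real.exp (-y / (2 * cirLt κ σ t)) * y ^ ((2 * κ * θ / σ ^ 2 - 1) / 2) *
    besselI (2 * κ * θ / σ ^ 2 - 1) (Real.sqrt (y * cirYt κ t y₀) / cirLt κ σ t)

open Real


/-- `n! * Γ(μ+1) ≤ Γ(n+μ+1)` for `μ ≥ 0`. -/
lemma gamma_prod_lb {μ : ℝ} (hμ : 0 ≤ μ) : ∀ n : ℕ,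
    (n.factorial : ℝ) * Real.Gamma (μ + 1) ≤ Real.Gamma (n + μ + 1) := by
  intro n
  induction n with
  | zero => simp
  | succ k ih =>
    have hk : (0:ℝ) < (k:ℝ) + μ + 1 := by positivity
    have heq : Real.Gamma (((k:ℕ)+1 : ℕ) + μ + 1) = ((k:ℝ) + μ + 1) * Real.Gamma ((k:ℝ) + μ + 1) := by
      have := Real.Gamma_add_one hk.ne'
      push_cast
      rw [show (k:ℝ) + 1 + μ + 1 = ((k:ℝ) + μ + 1) + 1 by ring, this]
    rw [heq]
    have hΓpos : 0 < Real.Gamma ((k:ℝ) + μ + 1) := Real.Gamma_pos_of_pos hk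
    have h1 : ((k:ℝ) + 1) * ((k.factorial : ℝ) * Real.Gamma (μ + 1)) ≤
        ((k:ℝ) + μ + 1) * Real.Gamma ((k:ℝ) + μ + 1) := by
      have h2 : ((k:ℝ) + 1) ≤ (k:ℝ) + μ + 1 := by linarith
      have h3 : 0 ≤ (k.factorial : ℝ) * Real.Gamma (μ + 1) := by
        have := Real.Gamma_pos_of_pos (show (0:ℝ) < μ + 1 by linarith)
        positivity
      calc ((k:ℝ) + 1) * ((k.factorial : ℝ) * Real.Gamma (μ + 1))
          ≤ ((k:ℝ) + 1) * Real.Gamma ((k:ℝ) + μ + 1) := by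
            apply mul_le_mul_of_nonneg_left ih (by positivity)
        _ ≤ ((k:ℝ) + μ + 1) * Real.Gamma ((k:ℝ) + μ + 1) :=
            mul_le_mul_of_nonneg_right h2 hΓpos.le
    calc ((k+1).factorial : ℝ) * Real.Gamma (μ + 1)
        = ((k:ℝ)+1) * ((k.factorial : ℝ) * Real.Gamma (μ + 1)) := by
          rw [Nat.factorial_succ]; push_cast; ring
      _ ≤ _ := h1

/-- `Γ(n+ν+1) ≥ c · n!/(n+1)` with `c = min Γ(ν+1) Γ(ν+2)`, for `ν > -1`. -/
lemma gamma_lb {ν : ℝ} (hν : -1 < ν) (n : ℕ) :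
    min (Real.Gamma (ν+1)) (Real.Gamma (ν+2)) * (n.factorial : ℝ) / ((n:ℝ)+1)
      ≤ Real.Gamma ((n:ℝ) + ν + 1) := by
  have hn1 : (0:ℝ) < (n:ℝ) + 1 := by positivity
  rcases le_or_gt 0 ν with hν0 | hν0
  · have h := gamma_prod_lb hν0 n
    have hmin : min (Real.Gamma (ν+1)) (Real.Gamma (ν+2)) ≤ Real.Gamma (ν+1) := min_le_left _ _
    have hfac : (0:ℝ) ≤ (n.factorial : ℝ) := by positivity
    calc min (Real.Gamma (ν+1)) (Real.Gamma (ν+2)) * (n.factorial : ℝ) / ((n:ℝ)+1)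
        ≤ min (Real.Gamma (ν+1)) (Real.Gamma (ν+2)) * (n.factorial : ℝ) := by
          apply div_le_self ?_ (by linarith)
          have h1 : 0 < Real.Gamma (ν+1) := Real.Gamma_pos_of_pos (by linarith)
          have h2 : 0 < Real.Gamma (ν+2) := Real.Gamma_pos_of_pos (by linarith)
          positivity
      _ ≤ Real.Gamma (ν+1) * (n.factorial : ℝ) := by
          apply mul_le_mul_of_nonneg_right hmin hfac
      _ ≤ Real.Gamma ((n:ℝ) + ν + 1) := by rw [mul_comm]; exact h
  · -- -1 < ν < 0
    have hμ : (0:ℝ) ≤ ν + 1 := by linarith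
    have h := gamma_prod_lb hμ n
    -- h : n! * Γ(ν+2) ≤ Γ(n + (ν+1) + 1)
    have hpos : (0:ℝ) < (n:ℝ) + ν + 1 := by
      have : (0:ℝ) ≤ (n:ℝ) := n.cast_nonneg
      linarith
    have heq : Real.Gamma ((n:ℝ) + (ν+1) + 1) = ((n:ℝ) + ν + 1) * Real.Gamma ((n:ℝ) + ν + 1) := by
      have := Real.Gamma_add_one hpos.ne'
      rw [show (n:ℝ) + (ν+1) + 1 = ((n:ℝ) + ν + 1) + 1 by ring, this]
    rw [show ν + 1 + 1 = ν + 2 by ring] at h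
    rw [heq] at h
    -- so Γ(n+ν+1) ≥ n! Γ(ν+2)/(n+ν+1) ≥ n! Γ(ν+2)/(n+1)
    have hΓ2 : 0 < Real.Gamma (ν+2) := Real.Gamma_pos_of_pos (by linarith)
    have hmin : min (Real.Gamma (ν+1)) (Real.Gamma (ν+2)) ≤ Real.Gamma (ν+2) := min_le_right _ _
    have key : Real.Gamma (ν+2) * (n.factorial : ℝ) / ((n:ℝ)+1) ≤ Real.Gamma ((n:ℝ) + ν + 1) := by
      rw [div_le_iff₀ hn1]
      have hle : (n:ℝ) + ν + 1 ≤ (n:ℝ) + 1 := by linarith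
      have hΓpos : 0 < Real.Gamma ((n:ℝ) + ν + 1) := Real.Gamma_pos_of_pos hpos
      nlinarith [h]
    calc min (Real.Gamma (ν+1)) (Real.Gamma (ν+2)) * (n.factorial : ℝ) / ((n:ℝ)+1)
        ≤ Real.Gamma (ν+2) * (n.factorial : ℝ) / ((n:ℝ)+1) := by
          have : min (Real.Gamma (ν+1)) (Real.Gamma (ν+2)) ≤ Real.Gamma (ν+2) := min_le_right _ _
          gcongr
      _ ≤ _ := key

/-- `(2n+1) * centralBinom n ^ 2 ≤ 16 ^ n`. -/
lemma cb_sq (n : ℕ) : (2*n+1) * (Nat.centralBinom n)^2 ≤ 16^n := by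
  induction n with
  | zero => simp [Nat.centralBinom]
  | succ k ih =>
    have h := Nat.succ_mul_centralBinom_succ k
    have hsq : ((k+1) * Nat.centralBinom (k+1))^2 = (2*(2*k+1)*Nat.centralBinom k)^2 := by rw [h]
    have key : (k+1)^2 * ((2*(k+1)+1) * (Nat.centralBinom (k+1))^2) ≤ (k+1)^2 * 16^(k+1) := by
      have expand : (k+1)^2 * ((2*(k+1)+1) * (Nat.centralBinom (k+1))^2)
          = (2*k+3) * (2*(2*k+1)*Nat.centralBinom k)^2 := by
        rw [← hsq]; ring
      rw [expand]
      have h2 : (2*k+3) * (2*(2*k+1)*Nat.centralBinom k)^2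
          = 4*(2*k+3)*(2*k+1) * ((2*k+1) * (Nat.centralBinom k)^2) := by ring
      rw [h2]
      calc 4*(2*k+3)*(2*k+1) * ((2*k+1) * (Nat.centralBinom k)^2)
          ≤ 4*(2*k+3)*(2*k+1) * 16^k := Nat.mul_le_mul_left _ ih
        _ ≤ (16*(k+1)^2) * 16^k := by
            have : 4*(2*k+3)*(2*k+1) ≤ 16*(k+1)^2 := by nlinarith
            exact Nat.mul_le_mul_right _ this
        _ = (k+1)^2 * 16^(k+1) := by rw [pow_succ]; ring
    exact Nat.le_of_mul_le_mul_left key (by positivity)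


lemma tsum_exp_le {x : ℝ} (hx : 0 ≤ x) :
    ∑' n : ℕ, x^n / (n.factorial : ℝ) ≤ Real.exp x :=
  Real.tsum_le_of_sum_range_le (fun n => by positivity)
    (fun n => Real.sum_le_exp_of_nonneg hx n)

lemma summable_id_mul {x : ℝ} (hx : 0 ≤ x) :
    Summable (fun n : ℕ => (n:ℝ) * x^n / (n.factorial : ℝ)) := by
  apply Summable.of_nonneg_of_le (fun n => by positivity) (fun n => ?_)
    (Real.summable_pow_div_factorial (2*x))
  have h : (n:ℝ) ≤ 2^n := by exact_mod_cast (Nat.lt_two_pow_self (n := n)).le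
  calc (n:ℝ) * x^n / (n.factorial : ℝ) ≤ 2^n * x^n / (n.factorial : ℝ) := by gcongr
    _ = (2*x)^n / (n.factorial : ℝ) := by rw [mul_pow]

lemma tsum_id_mul_le {x : ℝ} (hx : 0 ≤ x) :
    ∑' n : ℕ, (n:ℝ) * x^n / (n.factorial : ℝ) ≤ x * Real.exp x := by
  rw [Summable.tsum_eq_zero_add (summable_id_mul hx)]
  have h0 : ((0:ℕ):ℝ) * x^0 / ((Nat.factorial 0 : ℕ) : ℝ) = 0 := by simp
  rw [h0, zero_add]
  have hcongr : ∀ k : ℕ, ((k+1:ℕ):ℝ) * x^(k+1) / (((k+1).factorial : ℕ) : ℝ)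
      = x * (x^k / (k.factorial : ℝ)) := by
    intro k
    rw [Nat.factorial_succ]
    push_cast
    have hk : ((k:ℝ)+1) ≠ 0 := by positivity
    have hf : ((k.factorial : ℕ) : ℝ) ≠ 0 := by positivity
    field_simp
    ring
  calc (∑' k : ℕ, ((k+1:ℕ):ℝ) * x^(k+1) / (((k+1).factorial : ℕ) : ℝ))
      = ∑' k : ℕ, x * (x^k / (k.factorial : ℝ)) := tsum_congr hcongr
    _ = x * ∑' k : ℕ, x^k / (k.factorial : ℝ) := tsum_mul_left
    _ ≤ x * Real.exp x := by
        apply mul_le_mul_of_nonneg_left (tsum_exp_le hx) hx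

lemma summable_even {x : ℝ} (hx : 0 ≤ x) :
    Summable (fun n : ℕ => x^(2*n) / (((2*n).factorial : ℕ) : ℝ)) := by
  apply Summable.of_nonneg_of_le (fun n => by positivity) (fun n => ?_)
    (Real.summable_pow_div_factorial (x^2))
  have h : (n.factorial : ℝ) ≤ ((2*n).factorial : ℝ) := by
    exact_mod_cast Nat.factorial_le (by omega)
  calc x^(2*n) / (((2*n).factorial : ℕ) : ℝ) ≤ x^(2*n) / (n.factorial : ℝ) := by
        have hfp : (0:ℝ) < (n.factorial : ℝ) := by exact_mod_cast Nat.factorial_pos n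
        gcongr
    _ = (x^2)^n / (n.factorial : ℝ) := by rw [← pow_mul]

lemma summable_even_mul {x : ℝ} (hx : 0 ≤ x) :
    Summable (fun n : ℕ => ((n:ℝ)+1) * x^(2*n) / (((2*n).factorial : ℕ) : ℝ)) := by
  apply Summable.of_nonneg_of_le (fun n => by positivity) (fun n => ?_)
    ((Real.summable_pow_div_factorial (2*x^2)).mul_left 2)
  have h : (n.factorial : ℝ) ≤ ((2*n).factorial : ℝ) := by
    exact_mod_cast Nat.factorial_le (by omega)
  have h2 : ((n:ℝ)+1) ≤ 2 * 2^n := by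
    have := (Nat.lt_two_pow_self (n := n))
    have : (n:ℝ) < 2^n := by exact_mod_cast this
    have h2n : (1:ℝ) ≤ 2^n := by exact_mod_cast Nat.one_le_two_pow
    linarith
  calc ((n:ℝ)+1) * x^(2*n) / (((2*n).factorial : ℕ) : ℝ)
      ≤ (2 * 2^n) * x^(2*n) / (n.factorial : ℝ) := by
        have hfp : (0:ℝ) < (n.factorial : ℝ) := by exact_mod_cast Nat.factorial_pos n
        gcongr
    _ = 2 * ((2*x^2)^n / (n.factorial : ℝ)) := by
        rw [mul_pow, ← pow_mul]; ring

lemma tsum_even_le {x : ℝ} (hx : 0 ≤ x) :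
    ∑' n : ℕ, x^(2*n) / (((2*n).factorial : ℕ) : ℝ) ≤ Real.exp x := by
  have h1 : ∑' n : ℕ, x^(2*n) / (((2*n).factorial : ℕ) : ℝ)
      ≤ ∑' m : ℕ, x^m / (m.factorial : ℝ) := by
    exact Summable.tsum_le_tsum_of_inj (f := fun n : ℕ => x^(2*n) / (((2*n).factorial : ℕ) : ℝ))
      (g := fun m : ℕ => x^m / (m.factorial : ℝ)) (fun n => 2*n)
      (fun a b h => by dsimp at h; omega)
      (fun c _ => by positivity) (fun n => le_rfl) (summable_even hx)
      (Real.summable_pow_div_factorial x)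
  exact h1.trans (tsum_exp_le hx)

lemma tsum_even_mul_le {x : ℝ} (hx : 0 ≤ x) :
    ∑' n : ℕ, ((n:ℝ)+1) * x^(2*n) / (((2*n).factorial : ℕ) : ℝ) ≤ (1 + x/2) * Real.exp x := by
  have hsummg : Summable (fun m : ℕ => ((m:ℝ)+2) * x^m / (m.factorial : ℝ) / 2) := by
    apply Summable.div_const
    have : Summable (fun m : ℕ => (m:ℝ) * x^m / (m.factorial : ℝ) + 2 * (x^m / (m.factorial : ℝ))) :=
      (summable_id_mul hx).add ((Real.summable_pow_div_factorial x).mul_left 2)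
    apply this.congr
    intro m; field_simp
  have h1 : ∑' n : ℕ, ((n:ℝ)+1) * x^(2*n) / (((2*n).factorial : ℕ) : ℝ)
      ≤ ∑' m : ℕ, ((m:ℝ)+2) * x^m / (m.factorial : ℝ) / 2 := by
    apply Summable.tsum_le_tsum_of_inj (f := fun n : ℕ => ((n:ℝ)+1) * x^(2*n) / (((2*n).factorial : ℕ) : ℝ))
      (g := fun m : ℕ => ((m:ℝ)+2) * x^m / (m.factorial : ℝ) / 2) (fun n => 2*n)
      (fun a b h => by dsimp at h; omega)
      (fun c _ => by positivity) (fun n => ?_) (summable_even_mul hx) hsummg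
    have : (((2*n : ℕ):ℝ)+2) = 2 * ((n:ℝ)+1) := by push_cast; ring
    rw [this]
    ring_nf
    exact le_rfl
  have h2 : ∑' m : ℕ, ((m:ℝ)+2) * x^m / (m.factorial : ℝ) / 2
      ≤ (1 + x/2) * Real.exp x := by
    have hsplit : ∀ m : ℕ, ((m:ℝ)+2) * x^m / (m.factorial : ℝ) / 2
        = (1/2) * ((m:ℝ) * x^m / (m.factorial : ℝ)) + (x^m / (m.factorial : ℝ)) := by
      intro m; field_simp
    rw [tsum_congr hsplit, Summable.tsum_add ((summable_id_mul hx).mul_left _)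
      (Real.summable_pow_div_factorial x), tsum_mul_left]
    have := tsum_id_mul_le hx
    have := tsum_exp_le hx
    nlinarith [Real.exp_pos x]
  exact h1.trans h2

set_option maxHeartbeats 1000000 in
lemma besselI_le {ν : ℝ} (hν : -1 < ν) {x : ℝ} (hx : 0 < x) :
    besselI ν x ≤ 3 / (2 * min (Real.Gamma (ν+1)) (Real.Gamma (ν+2)))
      * (x/2)^ν * (1 + Real.sqrt x) * Real.exp x := by
  set c := min (Real.Gamma (ν+1)) (Real.Gamma (ν+2)) with hc_def
  have hc : 0 < c := lt_min (Real.Gamma_pos_of_pos (by linarith)) (Real.Gamma_pos_of_pos (by linarith))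
  set s := 1 + Real.sqrt x with hs_def
  have hsx : 0 ≤ Real.sqrt x := Real.sqrt_nonneg x
  have hs0 : 0 < s := by positivity
  -- the comparison sequence
  set g : ℕ → ℝ := fun n => (1/c) * ((1/(2*s)) * (((n:ℝ)+1) * x^(2*n) / (((2*n).factorial : ℕ) : ℝ))
      + (s/2) * (x^(2*n) / (((2*n).factorial : ℕ) : ℝ))) with hg_def
  have hterm : ∀ n : ℕ, (x/2) ^ (2*n) / ((n.factorial : ℝ) * Real.Gamma ((n : ℝ) + ν + 1)) ≤ g n := by
    intro n
    have hΓpos : 0 < Real.Gamma ((n:ℝ) + ν + 1) :=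
      Real.Gamma_pos_of_pos (by have : (0:ℝ) ≤ (n:ℝ) := n.cast_nonneg; linarith)
    have hfacpos : (0:ℝ) < (n.factorial : ℝ) := by exact_mod_cast n.factorial_pos
    have hfac2pos : (0:ℝ) < (((2*n).factorial : ℕ) : ℝ) := by exact_mod_cast (2*n).factorial_pos
    have hn1 : (0:ℝ) < (n:ℝ) + 1 := by positivity
    have hsqp : (0:ℝ) < Real.sqrt (2*(n:ℝ)+1) := Real.sqrt_pos.2 (by positivity)
    -- central binomial: √(2n+1) * (2n)! ≤ 4^n * (n!)^2
    have hcb : Real.sqrt (2*(n:ℝ)+1) * (((2*n).factorial : ℕ) : ℝ) ≤ 4^n * (n.factorial : ℝ)^2 := by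
      have hcbfact : (((2*n).factorial : ℕ) : ℝ) = (Nat.centralBinom n : ℝ) * (n.factorial : ℝ)^2 := by
        have := Nat.choose_mul_factorial_mul_factorial (show n ≤ 2*n by omega)
        rw [show 2*n - n = n by omega] at this
        have : (Nat.centralBinom n) * n.factorial * n.factorial = (2*n).factorial := by
          rw [Nat.centralBinom_eq_two_mul_choose]; exact this
        rw [← this]; push_cast; ring
      have hsqcb : Real.sqrt (2*(n:ℝ)+1) * (Nat.centralBinom n : ℝ) ≤ 4^n := by
        have h16 : (2*(n:ℝ)+1) * (Nat.centralBinom n : ℝ)^2 ≤ 16^n := by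
          exact_mod_cast cb_sq n
        have h1 : Real.sqrt ((2*(n:ℝ)+1) * (Nat.centralBinom n : ℝ)^2) ≤ Real.sqrt (16^n) :=
          Real.sqrt_le_sqrt h16
        rw [Real.sqrt_mul (by positivity), Real.sqrt_sq (by positivity)] at h1
        have h2 : Real.sqrt ((16:ℝ)^n) = 4^n := by
          rw [show (16:ℝ) = 4^2 by norm_num, ← pow_mul, mul_comm 2 n, pow_mul,
            Real.sqrt_sq (by positivity)]
        rwa [h2] at h1
      calc Real.sqrt (2*(n:ℝ)+1) * (((2*n).factorial : ℕ) : ℝ)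
          = (Real.sqrt (2*(n:ℝ)+1) * (Nat.centralBinom n : ℝ)) * (n.factorial : ℝ)^2 := by
            rw [hcbfact]; ring
        _ ≤ 4^n * (n.factorial : ℝ)^2 := by
            apply mul_le_mul_of_nonneg_right hsqcb (by positivity)
    -- key denominator inequality
    have hΓ := gamma_lb hν n
    have hkey : c * Real.sqrt (2*(n:ℝ)+1) * (((2*n).factorial : ℕ) : ℝ)
        ≤ ((n:ℝ)+1) * (4^n * ((n.factorial : ℝ) * Real.Gamma ((n:ℝ) + ν + 1))) := by
      calc c * Real.sqrt (2*(n:ℝ)+1) * (((2*n).factorial : ℕ) : ℝ)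
          ≤ c * (4^n * (n.factorial : ℝ)^2) := by
            rw [mul_assoc]; exact mul_le_mul_of_nonneg_left hcb hc.le
        _ = ((n:ℝ)+1) * (4^n * ((n.factorial : ℝ) * (c * (n.factorial : ℝ) / ((n:ℝ)+1)))) := by
            field_simp
        _ ≤ ((n:ℝ)+1) * (4^n * ((n.factorial : ℝ) * Real.Gamma ((n:ℝ) + ν + 1))) := by
            gcongr
    -- step 1
    have hstep1 : (x/2) ^ (2*n) / ((n.factorial : ℝ) * Real.Gamma ((n : ℝ) + ν + 1))
        ≤ ((n:ℝ)+1) * x^(2*n) / (c * Real.sqrt (2*(n:ℝ)+1) * (((2*n).factorial : ℕ) : ℝ)) := by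
      have hpow : (x/2 : ℝ) ^ (2*n) = x^(2*n) / 4^n := by
        rw [div_pow, show ((2:ℝ))^(2*n) = 4^n by rw [pow_mul]; norm_num]
      rw [hpow, div_div, div_le_div_iff₀ (by positivity) (by positivity)]
      calc x ^ (2*n) * (c * Real.sqrt (2*(n:ℝ)+1) * (((2*n).factorial : ℕ) : ℝ))
          ≤ x^(2*n) * (((n:ℝ)+1) * (4^n * ((n.factorial : ℝ) * Real.Gamma ((n:ℝ) + ν + 1)))) := by
            apply mul_le_mul_of_nonneg_left hkey (by positivity)
        _ = ((n:ℝ)+1) * x^(2*n) * (4^n * ((n.factorial : ℝ) * Real.Gamma ((n:ℝ) + ν + 1))) := by ring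
    -- step 2 : (n+1)/√(2n+1) ≤ √(n+1) ≤ (n+1)/(2s) + s/2
    have hsq1 : ((n:ℝ)+1) / Real.sqrt (2*(n:ℝ)+1) ≤ Real.sqrt ((n:ℝ)+1) := by
      rw [div_le_iff₀ hsqp, ← Real.sqrt_mul hn1.le]
      calc ((n:ℝ)+1) = Real.sqrt (((n:ℝ)+1)^2) := (Real.sqrt_sq hn1.le).symm
        _ ≤ Real.sqrt (((n:ℝ)+1) * (2*(n:ℝ)+1)) := Real.sqrt_le_sqrt (by nlinarith)
    have hsq2 : Real.sqrt ((n:ℝ)+1) ≤ ((n:ℝ)+1)/(2*s) + s/2 := by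
      have h1 := sq_nonneg (s - Real.sqrt ((n:ℝ)+1))
      have h2 : Real.sqrt ((n:ℝ)+1) ^ 2 = (n:ℝ)+1 := Real.sq_sqrt hn1.le
      rw [div_add_div _ _ (by positivity) (by norm_num), le_div_iff₀ (by positivity)]
      nlinarith
    -- combine
    calc (x/2) ^ (2*n) / ((n.factorial : ℝ) * Real.Gamma ((n : ℝ) + ν + 1))
        ≤ ((n:ℝ)+1) * x^(2*n) / (c * Real.sqrt (2*(n:ℝ)+1) * (((2*n).factorial : ℕ) : ℝ)) := hstep1
      _ = (1/c) * (((n:ℝ)+1) / Real.sqrt (2*(n:ℝ)+1)) * (x^(2*n) / (((2*n).factorial : ℕ) : ℝ)) := by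
          field_simp
          try ring
      _ ≤ (1/c) * (((n:ℝ)+1)/(2*s) + s/2) * (x^(2*n) / (((2*n).factorial : ℕ) : ℝ)) := by
          have hA := hsq1.trans hsq2
          gcongr
      _ = g n := by rw [hg_def]; field_simp
  -- summability
  have hsumg : Summable g := by
    apply Summable.mul_left
    exact ((summable_even_mul hx.le).mul_left _).add ((summable_even hx.le).mul_left _)
  have hsumf : Summable (fun n : ℕ => (x/2) ^ (2*n) / ((n.factorial : ℝ) * Real.Gamma ((n : ℝ) + ν + 1))) := by
    apply Summable.of_nonneg_of_le _ hterm hsumg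
    intro n
    have hΓpos : 0 < Real.Gamma ((n:ℝ) + ν + 1) :=
      Real.Gamma_pos_of_pos (by have : (0:ℝ) ≤ (n:ℝ) := n.cast_nonneg; linarith)
    positivity
  -- tsum bound
  have htsum : ∑' n : ℕ, (x/2) ^ (2*n) / ((n.factorial : ℝ) * Real.Gamma ((n : ℝ) + ν + 1))
      ≤ 3/(2*c) * (1 + Real.sqrt x) * Real.exp x := by
    have h1 := Summable.tsum_le_tsum hterm hsumf hsumg
    have h2 : ∑' n, g n = (1/c) * ((1/(2*s)) * ∑' n : ℕ, (((n:ℝ)+1) * x^(2*n) / (((2*n).factorial : ℕ) : ℝ))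
        + (s/2) * ∑' n : ℕ, (x^(2*n) / (((2*n).factorial : ℕ) : ℝ))) := by
      rw [hg_def, tsum_mul_left, Summable.tsum_add ((summable_even_mul hx.le).mul_left _)
        ((summable_even hx.le).mul_left _), tsum_mul_left, tsum_mul_left]
    rw [h2] at h1
    refine h1.trans ?_
    have hT1 := tsum_even_mul_le hx.le
    have hT0 := tsum_even_le hx.le
    have hT1nn : (0:ℝ) ≤ ∑' n : ℕ, (((n:ℝ)+1) * x^(2*n) / (((2*n).factorial : ℕ) : ℝ)) :=
      tsum_nonneg (fun n => by positivity)
    have hexp : 0 < Real.exp x := Real.exp_pos x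
    have hmain : (1/(2*s)) * ((1 + x/2) * Real.exp x) + (s/2) * Real.exp x
        ≤ 3/2 * s * Real.exp x := by
      have hsq : s^2 = 1 + 2*Real.sqrt x + x := by
        rw [hs_def]; have := Real.sq_sqrt hx.le; nlinarith
      have h2s : 1 + x/2 ≤ 2*s^2 := by nlinarith
      have e1 : (1/(2*s)) * ((1 + x/2) * Real.exp x) ≤ (1/(2*s)) * (2*s^2 * Real.exp x) := by
        apply mul_le_mul_of_nonneg_left (mul_le_mul_of_nonneg_right h2s hexp.le) (by positivity)
      have e2 : (1/(2*s)) * (2*s^2 * Real.exp x) = s * Real.exp x := by field_simp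
      linarith [e1, e2]
    have hstep : (1/(2*s)) * ∑' n : ℕ, (((n:ℝ)+1) * x^(2*n) / (((2*n).factorial : ℕ) : ℝ))
        + (s/2) * ∑' n : ℕ, (x^(2*n) / (((2*n).factorial : ℕ) : ℝ))
        ≤ (1/(2*s)) * ((1 + x/2) * Real.exp x) + (s/2) * Real.exp x :=
      add_le_add (mul_le_mul_of_nonneg_left hT1 (by positivity))
        (mul_le_mul_of_nonneg_left hT0 (by positivity))
    calc (1/c) * ((1/(2*s)) * ∑' n : ℕ, (((n:ℝ)+1) * x^(2*n) / (((2*n).factorial : ℕ) : ℝ))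
        + (s/2) * ∑' n : ℕ, (x^(2*n) / (((2*n).factorial : ℕ) : ℝ)))
        ≤ (1/c) * (3/2 * s * Real.exp x) := by
          apply mul_le_mul_of_nonneg_left (hstep.trans hmain) (by positivity)
      _ = 3/(2*c) * (1 + Real.sqrt x) * Real.exp x := by rw [hs_def]; field_simp
  -- conclude
  have hxp : (0:ℝ) ≤ (x/2)^ν := Real.rpow_nonneg (by positivity) ν
  calc besselI ν x = (x/2)^ν * ∑' n : ℕ, (x/2) ^ (2*n) / ((n.factorial : ℝ) * Real.Gamma ((n : ℝ) + ν + 1)) := rfl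
    _ ≤ (x/2)^ν * (3/(2*c) * (1 + Real.sqrt x) * Real.exp x) :=
        mul_le_mul_of_nonneg_left htsum hxp
    _ = 3 / (2 * c) * (x/2)^ν * (1 + Real.sqrt x) * Real.exp x := by ring

/- STATEMENT 7: Gaussian-type upper bound, with a constant depending only on `β`,
for the CIR transition density. -/
set_option maxHeartbeats 1000000 in
theorem stmt_7 (β : ℝ) (hβ : 0 < β) :
    ∃ C : ℝ, 0 < C ∧
      ∀ κ θ σ : ℝ, 0 < κ → 0 < θ → 0 < σ → β = 2 * κ * θ / σ ^ 2 →
        ∀ t : ℝ, 0 < t → ∀ y₀ : ℝ, 0 < y₀ → ∀ y : ℝ, 0 < y →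
          cirDensity κ θ σ t y₀ y ≤
            C / cirLt κ σ t ^ (β + 1 / 2) *
              Real.exp (-(Real.sqrt y - Real.sqrt (cirYt κ t y₀)) ^ 2 / (2 * cirLt κ σ t)) *
              y ^ (β - 1) *
              (cirLt κ σ t ^ ((1 : ℝ) / 2) + (y * cirYt κ t y₀) ^ ((1 : ℝ) / 4)) := by
  have hΓ1 : 0 < Real.Gamma β := Real.Gamma_pos_of_pos hβ
  have hΓ2 : 0 < Real.Gamma (β + 1) := Real.Gamma_pos_of_pos (by linarith)
  set K : ℝ := 3 / (2 * min (Real.Gamma β) (Real.Gamma (β+1))) with hK_def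
  have hK : 0 < K := by
    have : 0 < min (Real.Gamma β) (Real.Gamma (β+1)) := lt_min hΓ1 hΓ2
    positivity
  refine ⟨K * (2:ℝ)^(-β), by positivity, ?_⟩
  intro κ θ σ hκ hθ hσ hβeq t ht y₀ hy₀ y hy
  set L := cirLt κ σ t with hL_def
  set A := cirYt κ t y₀ with hA_def
  have hA : 0 < A := by rw [hA_def, cirYt]; positivity
  have hL : 0 < L := by
    rw [hL_def, cirLt]
    have h1 : Real.exp (-(κ * t)) < 1 := Real.exp_lt_one_iff.2 (by nlinarith)
    have h2 : 0 < 1 - Real.exp (-(κ * t)) := by linarith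
    positivity
  have hyA : 0 < y * A := mul_pos hy hA
  have hq : 0 < Real.sqrt (y * A) := Real.sqrt_pos.2 hyA
  have hx : 0 < Real.sqrt (y * A) / L := by positivity
  have hν : -1 < β - 1 := by linarith
  -- rewrite the density in terms of β
  have hdens : cirDensity κ θ σ t y₀ y =
      Real.exp (-A / (2 * L)) / (2 * A ^ ((β - 1) / 2) * L) *
        Real.exp (-y / (2 * L)) * y ^ ((β - 1) / 2) *
        besselI (β - 1) (Real.sqrt (y * A) / L) := by
    rw [cirDensity, ← hβeq, ← hL_def, ← hA_def]
  rw [hdens]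
  -- abbreviations
  set u : ℝ := y ^ ((β - 1) / 2) with hu_def
  set a : ℝ := A ^ ((β - 1) / 2) with ha_def
  have hu : 0 < u := Real.rpow_pos_of_pos hy _
  have ha : 0 < a := Real.rpow_pos_of_pos hA _
  -- Bessel bound
  have hbessel := besselI_le hν hx
  rw [show β - 1 + 1 = β by ring, show β - 1 + 2 = β + 1 by ring, ← hK_def] at hbessel
  have hbnn : 0 ≤ Real.exp (-A / (2 * L)) / (2 * a * L) * Real.exp (-y / (2 * L)) * u := by
    positivity
  have step1 : Real.exp (-A / (2 * L)) / (2 * a * L) * Real.exp (-y / (2 * L)) * u *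
      besselI (β - 1) (Real.sqrt (y * A) / L)
      ≤ Real.exp (-A / (2 * L)) / (2 * a * L) * Real.exp (-y / (2 * L)) * u *
        (K * (Real.sqrt (y * A) / L / 2) ^ (β - 1) * (1 + Real.sqrt (Real.sqrt (y * A) / L))
          * Real.exp (Real.sqrt (y * A) / L)) :=
    mul_le_mul_of_nonneg_left hbessel hbnn
  refine step1.trans (le_of_eq ?_)
  -- exponential identity
  have hy2 : Real.sqrt y ^ 2 = y := Real.sq_sqrt hy.le
  have hA2 : Real.sqrt A ^ 2 = A := Real.sq_sqrt hA.le
  have hsqmul : Real.sqrt (y * A) = Real.sqrt y * Real.sqrt A := Real.sqrt_mul hy.le A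
  have hE : Real.exp (-A / (2 * L)) * Real.exp (-y / (2 * L)) * Real.exp (Real.sqrt (y * A) / L)
      = Real.exp (-(Real.sqrt y - Real.sqrt A) ^ 2 / (2 * L)) := by
    rw [← Real.exp_add, ← Real.exp_add]
    congr 1
    have hsub : (Real.sqrt y - Real.sqrt A) ^ 2 = y - 2 * (Real.sqrt y * Real.sqrt A) + A := by
      rw [sub_sq, hy2, hA2]; ring
    rw [hsqmul, hsub]
    field_simp
    ring
  -- power identities
  have key1 : (Real.sqrt (y * A) / L / 2) ^ (β - 1) = u * a / ((2:ℝ) ^ (β - 1) * L ^ (β - 1)) := by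
    rw [show Real.sqrt (y * A) / L / 2 = Real.sqrt (y * A) / (2 * L) by ring,
      Real.div_rpow (Real.sqrt_nonneg _) (by positivity),
      Real.mul_rpow (by norm_num) hL.le, Real.sqrt_eq_rpow,
      ← Real.rpow_mul hyA.le, show 1 / 2 * (β - 1) = (β - 1) / 2 by ring,
      Real.mul_rpow hy.le hA.le]
  have key2 : Real.sqrt (Real.sqrt (y * A) / L)
      = (y * A) ^ ((1:ℝ) / 4) / L ^ ((1:ℝ) / 2) := by
    rw [Real.sqrt_eq_rpow, Real.div_rpow (Real.sqrt_nonneg _) hL.le, Real.sqrt_eq_rpow,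
      ← Real.rpow_mul hyA.le]
    norm_num
  have hu2 : u * u = y ^ (β - 1) := by
    rw [hu_def, ← Real.rpow_add hy]
    congr 1
    ring
  have key3 : L ^ (β - 1) * L ^ ((1:ℝ) / 2) * L = L ^ (β + 1 / 2) := by
    calc L ^ (β - 1) * L ^ ((1:ℝ) / 2) * L = L ^ (β - 1 + 1/2) * L ^ (1:ℝ) := by
          rw [← Real.rpow_add hL, Real.rpow_one]
      _ = L ^ (β - 1 + 1/2 + 1) := (Real.rpow_add hL _ _).symm
      _ = L ^ (β + 1 / 2) := by congr 1; ring
  have hC2 : (2:ℝ) ^ (-β) = ((2:ℝ) ^ (β - 1) * 2)⁻¹ := by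
    rw [Real.rpow_neg (by norm_num : (0:ℝ) ≤ 2)]
    congr 1
    rw [show (2:ℝ) ^ (β - 1) * 2 = (2:ℝ) ^ (β - 1) * (2:ℝ) ^ (1:ℝ) by rw [Real.rpow_one],
      ← Real.rpow_add (by norm_num : (0:ℝ) < 2)]
    congr 1
    ring
  -- final algebraic equality
  have h2b : (0:ℝ) < (2:ℝ) ^ (β - 1) := Real.rpow_pos_of_pos (by norm_num) _
  have hLb1 : (0:ℝ) < L ^ (β - 1) := Real.rpow_pos_of_pos hL _
  have hLhalf : (0:ℝ) < L ^ ((1:ℝ) / 2) := Real.rpow_pos_of_pos hL _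
  calc Real.exp (-A / (2 * L)) / (2 * a * L) * Real.exp (-y / (2 * L)) * u *
        (K * (Real.sqrt (y * A) / L / 2) ^ (β - 1) * (1 + Real.sqrt (Real.sqrt (y * A) / L))
          * Real.exp (Real.sqrt (y * A) / L))
      = (Real.exp (-A / (2 * L)) * Real.exp (-y / (2 * L)) * Real.exp (Real.sqrt (y * A) / L)) *
        (u / (2 * a * L) * K * (Real.sqrt (y * A) / L / 2) ^ (β - 1) *
          (1 + Real.sqrt (Real.sqrt (y * A) / L))) := by ring
    _ = Real.exp (-(Real.sqrt y - Real.sqrt A) ^ 2 / (2 * L)) *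
        (u / (2 * a * L) * K * (u * a / ((2:ℝ) ^ (β - 1) * L ^ (β - 1))) *
          (1 + (y * A) ^ ((1:ℝ) / 4) / L ^ ((1:ℝ) / 2))) := by
        rw [hE, key1, key2]
    _ = K * (2:ℝ) ^ (-β) / L ^ (β + 1 / 2) *
        Real.exp (-(Real.sqrt y - Real.sqrt A) ^ 2 / (2 * L)) * y ^ (β - 1) *
        (L ^ ((1:ℝ) / 2) + (y * A) ^ ((1:ℝ) / 4)) := by
        rw [← hu2, ← key3, hC2]
        field_simp
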